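/- Vertex gadget (Lemma on (j, c_i, ℓ)-vertex gadgets): for all j, ℓ ∈ ℕ there exists an SRTI instance H with a distinguished vertex c_i whose only incident edge is e = {c_i, w} for a distinguished vertex w, with rk_{c_i}(w) = ℓ, such that: (i) stable matchings of H not containing e exist, the maximum size of a stable matching of H not containing e is j + 2, and every such matching leaves c_i unmatched while e is not blocking; (ii) stable matchings of H containing e exist and the maximum size of a stable matching of H containing e is 2j + 2 (counting the edge e); moreover the gadget H − c_i has 4j + 4 vertices and tree-cut width at most 4. -/

import Mathlib

open scoped Classical

noncomputable section

/-- A multigraph on an ambient type `A`: a set of vertices together with an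
edge-multiplicity function on unordered pairs (loops allowed). -/
structure Multigraph (A : Type) where
  verts : Set A
  mult : Sym2 A → ℕ

namespace Multigraph

variable {A : Type} [Fintype A]

/-- The degree of a vertex in a multigraph; a loop contributes `2` to the degree. -/
def deg (M : Multigraph A) (x : A) : ℕ :=
  (∑ y : A, M.mult s(x, y)) + M.mult s(x, x)

/-- Suppressing the vertex `v`: delete `v` (and all edges incident to it) and, if `v`
had exactly two edge-endpoints at distinct neighbours `a`, `b`, add an edge `{a,b}`;
if `v` had a double edge to a vertex `a`, add a loop at `a`.  (The formula below is
the intended operation when `deg v ≤ 2`.) -/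
def suppress (M : Multigraph A) (v : A) : Multigraph A where
  verts := M.verts \ {v}
  mult := Sym2.lift ⟨fun x y =>
    if x = v ∨ y = v then 0
    else M.mult s(x, y) +
      (if x = y then (if M.mult s(v, x) = 2 then 1 else 0)
       else min (M.mult s(v, x)) 1 * min (M.mult s(v, y)) 1),
    by
      intro x y
      rcases eq_or_ne x y with rfl | hxy
      · rfl
      · dsimp only
        by_cases h : x = v ∨ y = v
        · rw [if_pos h, if_pos (Or.symm h)]
        · rw [if_neg h, if_neg (fun hc => h (Or.symm hc)), if_neg hxy, if_neg (Ne.symm hxy)]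
          have h1 : s(x, y) = s(y, x) := Sym2.eq_swap
          rw [h1, Nat.mul_comm]⟩

/-- One step of suppression: suppress some vertex of degree at most `2`. -/
def SuppressStep (M M' : Multigraph A) : Prop :=
  ∃ v ∈ M.verts, M.deg v ≤ 2 ∧ M' = M.suppress v

/-- A multigraph in which no vertex of degree at most `2` is left. -/
def Reduced (M : Multigraph A) : Prop := ∀ v ∈ M.verts, 3 ≤ M.deg v

/-- The number of vertices remaining after exhaustively suppressing vertices of degree
at most `2`. -/
def reducedSize (M : Multigraph A) : ℕ :=
  sInf {n | ∃ M' : Multigraph A,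
    Relation.ReflTransGen SuppressStep M M' ∧ M'.Reduced ∧ n = M'.verts.ncard}

end Multigraph

/-- A (rooted) tree-cut decomposition of a graph on vertex type `V`: a tree `T` on a
node type `N`, a root, and a near-partition of `V` into bags indexed by the nodes. -/
structure TreeCutDecomp (N V : Type) where
  T : SimpleGraph N
  connected : T.Connected
  acyclic : T.IsAcyclic
  root : N
  bag : N → Set V
  bag_disjoint : ∀ s t : N, s ≠ t → Disjoint (bag s) (bag t)
  bag_cover : ∀ v : V, ∃ t : N, v ∈ bag t

namespace TreeCutDecomp

variable {N V : Type} [Fintype N] [Fintype V] (D : TreeCutDecomp N V)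

/-- The nodes in the subtree rooted at `t`: those nodes whose every walk to the root
passes through `t`. -/
def subtree (t : N) : Set N := {u | ∀ p : D.T.Walk u D.root, t ∈ p.support}

/-- The set of graph vertices contained in bags of the subtree rooted at `t`. -/
def Yset (t : N) : Set V := {v | ∃ u ∈ D.subtree t, v ∈ D.bag u}

/-- The adhesion of a node `t`: the number of edges of `G` crossing between the vertices
below `t` and the remaining vertices (this is `cut(e(t))` for `t ≠ root`, and `0` for
the root). -/
def adh (G : SimpleGraph V) (t : N) : ℕ :=
  Set.ncard {e : Sym2 V | e ∈ G.edgeSet ∧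
    ∃ x y : V, e = s(x, y) ∧ x ∈ D.Yset t ∧ y ∉ D.Yset t}

/-- The nodes in the component of `T - t` containing the neighbour `s` of `t`:
those nodes whose every walk to `t` passes through `s`. -/
def branch (t s : N) : Set N := {u | ∀ p : D.T.Walk u t, s ∈ p.support}

/-- Some node whose bag contains `v`. -/
def nodeOf (v : V) : N := @Classical.epsilon N ⟨D.root⟩ (fun u => v ∈ D.bag u)

/-- The projection used to build the torso at `t`: vertices in the bag of `t` are kept,
and any other vertex is mapped to (the contracted vertex corresponding to) the
component of `T - t` containing its bag's node, represented by the neighbour `s` of `t`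
in that component. -/
def proj (t : N) (v : V) : V ⊕ N :=
  if v ∈ D.bag t then Sum.inl v
  else Sum.inr (@Classical.epsilon N ⟨D.root⟩
    (fun s => D.T.Adj t s ∧ D.nodeOf v ∈ D.branch t s))

/-- The torso of the decomposition at node `t`: the multigraph obtained from `G` by
contracting, for each component of `T - t`, the union of bags of that component into a
single vertex (no loops are created; parallel edges are counted with multiplicity). -/
def torso (G : SimpleGraph V) (t : N) : Multigraph (V ⊕ N) where
  verts := (Sum.inl '' D.bag t) ∪ (Sum.inr '' (D.T.neighborSet t))
  mult := fun e => Set.ncard {f : Sym2 V | f ∈ G.edgeSet ∧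
    Sym2.map (D.proj t) f = e ∧ ¬ (Sym2.map (D.proj t) f).IsDiag}

/-- The torso-size of a node `t`: the number of vertices left after exhaustively
suppressing vertices of degree at most `2` in the torso at `t`. -/
def tor (G : SimpleGraph V) (t : N) : ℕ := (D.torso G t).reducedSize

/-- The width of the tree-cut decomposition. -/
def width (G : SimpleGraph V) : ℕ :=
  Finset.univ.sup fun t : N => max (D.adh G t) (D.tor G t)

end TreeCutDecomp

/-- The tree-cut width of a graph: the minimum width of a (rooted) tree-cut
decomposition. -/
def tcw {V : Type} [Fintype V] (G : SimpleGraph V) : ℕ :=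
  sInf {w | ∃ (N : Type) (_ : Fintype N) (D : TreeCutDecomp N V), D.width G = w}


/-- A matching of a graph `G`, given by the partner function: `partner v = v` means
that `v` is unmatched, and otherwise `v` is matched to `partner v`, which must be one
of its neighbours in the acceptability graph `G`. -/
structure Matching {V : Type} (G : SimpleGraph V) where
  partner : V → V
  involutive : ∀ v, partner (partner v) = v
  adj_of_ne : ∀ v, partner v ≠ v → G.Adj v (partner v)

/-- The set of edges of a matching. -/
def Matching.edgeSet {V : Type} {G : SimpleGraph V} (M : Matching G) : Set (Sym2 V) :=
  {e | ∃ v, M.partner v ≠ v ∧ e = s(v, M.partner v)}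

/-- The pair `{v, w}` is blocking for the matching `M` (with respect to the rank
functions `rk`, where `rk v w = ⊤` encodes that `v` prefers any acceptable partner to
`w`; in particular `rk v v = ⊤`, so that an unmatched agent prefers every neighbour to
staying alone): `v` and `w` are adjacent, and each strictly prefers the other to its
current situation. -/
def IsBlocking {V : Type} (G : SimpleGraph V) (rk : V → V → ℕ∞) (M : Matching G)
    (v w : V) : Prop :=
  G.Adj v w ∧ rk v w < rk v (M.partner v) ∧ rk w v < rk w (M.partner w)

/-- A matching is stable if no edge of `G` is blocking. -/
def Stable {V : Type} (G : SimpleGraph V) (rk : V → V → ℕ∞) (M : Matching G) : Prop :=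
  ∀ v w : V, ¬ IsBlocking G rk M v w

namespace VG
inductive Core : Type | c | w | p | g | h deriving DecidableEq
instance : Fintype Core := ⟨⟨↑[Core.c, .w, .p, .g, .h], by decide⟩, fun x => by cases x <;> decide⟩
inductive Blk : Type | pa | px | py | pz deriving DecidableEq
instance : Fintype Blk := ⟨⟨↑[Blk.pa, .px, .py, .pz], by decide⟩, fun x => by cases x <;> decide⟩
abbrev W (j : ℕ) : Type := Core ⊕ (Fin j × Blk)

lemma card_W (j : ℕ) : Fintype.card (W j) = 4 * j + 5 := by
  have h1 : Fintype.card Core = 5 := rfl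
  have h2 : Fintype.card Blk = 4 := rfl
  simp [Fintype.card_sum, Fintype.card_prod, h1, h2]; omega

def eW (j : ℕ) : W j ≃ Fin (4*j+5) := Fintype.equivFinOfCardEq (card_W j)

def rk' (j ℓ : ℕ) : W j → W j → ℕ∞
  | .inl .c, b => if b = .inl .w then (ℓ : ℕ∞) else ⊤
  | .inl .w, b => if b = .inl .c then 2 else if b = .inl .p then 1 else ⊤
  | .inl .p, b => if b = .inl .w then 3 else if b = .inl .g then 1 else
      (match b with | .inr (_, .pa) => 2 | _ => ⊤)
  | .inl .g, b => if b = .inl .p then 1 else if b = .inl .h then 1 else ⊤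
  | .inl .h, b => if b = .inl .g then 1 else ⊤
  | .inr (k, .pa), b => if b = .inr (k, .px) then 1 else if b = .inl .p then 2
      else if b = .inr (k, .py) then 3 else ⊤
  | .inr (k, .px), b => if b = .inr (k, .pa) then 1 else if b = .inr (k, .pz) then 1 else ⊤
  | .inr (k, .py), b => if b = .inr (k, .pa) then 1 else ⊤
  | .inr (k, .pz), b => if b = .inr (k, .px) then 1 else ⊤

def ADJ (j ℓ : ℕ) (a b : W j) : Prop := a ≠ b ∧ rk' j ℓ a b ≠ ⊤ ∧ rk' j ℓ b a ≠ ⊤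

lemma ADJ_symm {j ℓ : ℕ} {a b : W j} (h : ADJ j ℓ a b) : ADJ j ℓ b a :=
  ⟨h.1.symm, h.2.2, h.2.1⟩

/-- partner function for the matching avoiding e -/
def f1 (j : ℕ) : W j → W j
  | .inl .c => .inl .c
  | .inl .w => .inl .p
  | .inl .p => .inl .w
  | .inl .g => .inl .h
  | .inl .h => .inl .g
  | .inr (k, .pa) => .inr (k, .px)
  | .inr (k, .px) => .inr (k, .pa)
  | .inr (k, .py) => .inr (k, .py)
  | .inr (k, .pz) => .inr (k, .pz)

/-- partner function for the matching containing e -/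
def f2 (j : ℕ) : W j → W j
  | .inl .c => .inl .w
  | .inl .w => .inl .c
  | .inl .p => .inl .g
  | .inl .g => .inl .p
  | .inl .h => .inl .h
  | .inr (k, .pa) => .inr (k, .py)
  | .inr (k, .py) => .inr (k, .pa)
  | .inr (k, .px) => .inr (k, .pz)
  | .inr (k, .pz) => .inr (k, .px)

lemma f1_invol (j : ℕ) : ∀ a, f1 j (f1 j a) = a := by
  rintro (a | ⟨k, b⟩)
  · cases a <;> rfl
  · cases b <;> rfl

lemma f2_invol (j : ℕ) : ∀ a, f2 j (f2 j a) = a := by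
  rintro (a | ⟨k, b⟩)
  · cases a <;> rfl
  · cases b <;> rfl
  

lemma rk'_self (j ℓ : ℕ) : ∀ a, rk' j ℓ a a = ⊤ := by
  rintro (a | ⟨k, b⟩)
  · cases a <;> simp [rk']
  · cases b <;> simp [rk']

/-- The acceptability graph on `Fin (4j+5)`. -/
def Hg (j ℓ : ℕ) : SimpleGraph (Fin (4*j+5)) where
  Adj v u := ADJ j ℓ ((eW j).symm v) ((eW j).symm u)
  symm := ⟨fun _ _ h => ADJ_symm h⟩
  loopless := ⟨fun v h => h.1 rfl⟩

/-- The rank function on `Fin (4j+5)`. -/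
def rkF (j ℓ : ℕ) (v u : Fin (4*j+5)) : ℕ∞ := rk' j ℓ ((eW j).symm v) ((eW j).symm u)

@[simp] lemma Hg_adj_eW (j ℓ : ℕ) (a b : W j) :
    (Hg j ℓ).Adj (eW j a) (eW j b) ↔ ADJ j ℓ a b := by
  simp [Hg, SimpleGraph.Adj]

@[simp] lemma rkF_eW (j ℓ : ℕ) (a b : W j) :
    rkF j ℓ (eW j a) (eW j b) = rk' j ℓ a b := by
  simp [rkF]

lemma adj_f1 (j ℓ : ℕ) : ∀ a : W j, f1 j a ≠ a → ADJ j ℓ a (f1 j a) := by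
  rintro (a | ⟨k, b⟩) h
  · cases a <;> simp_all [f1, ADJ, rk'] <;> decide
  · cases b <;> simp_all [f1, ADJ, rk'] <;> decide

lemma adj_f2 (j ℓ : ℕ) : ∀ a : W j, f2 j a ≠ a → ADJ j ℓ a (f2 j a) := by
  rintro (a | ⟨k, b⟩) h
  · cases a <;> simp_all [f2, ADJ, rk'] <;> first | decide | exact ⟨ENat.coe_ne_top ℓ, by decide⟩
  · cases b <;> simp_all [f2, ADJ, rk'] <;> decide

/-- matching avoiding e -/
def M1 (j ℓ : ℕ) : Matching (Hg j ℓ) where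
  partner v := eW j (f1 j ((eW j).symm v))
  involutive v := by simp [f1_invol]
  adj_of_ne v h := by
    have h2 : f1 j ((eW j).symm v) ≠ (eW j).symm v := by
      intro hx
      apply h
      show (eW j) (f1 j ((eW j).symm v)) = v
      rw [hx]; simp
    have hadj := adj_f1 j ℓ _ h2
    show ADJ j ℓ ((eW j).symm v) ((eW j).symm ((eW j) (f1 j ((eW j).symm v))))
    simpa using hadj

/-- matching containing e -/
def M2 (j ℓ : ℕ) : Matching (Hg j ℓ) where
  partner v := eW j (f2 j ((eW j).symm v))
  involutive v := by simp [f2_invol]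
  adj_of_ne v h := by
    have h2 : f2 j ((eW j).symm v) ≠ (eW j).symm v := by
      intro hx
      apply h
      show (eW j) (f2 j ((eW j).symm v)) = v
      rw [hx]; simp
    have hadj := adj_f2 j ℓ _ h2
    show ADJ j ℓ ((eW j).symm v) ((eW j).symm ((eW j) (f2 j ((eW j).symm v))))
    simpa using hadj

lemma stableW1 (j ℓ : ℕ) : ∀ a b : W j,
    ¬ (ADJ j ℓ a b ∧ rk' j ℓ a b < rk' j ℓ a (f1 j a) ∧ rk' j ℓ b a < rk' j ℓ b (f1 j b)) := by
  rintro (a | ⟨k, i⟩) (b | ⟨k', i'⟩) ⟨⟨hne, h1, h2⟩, hb1, hb2⟩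
  · cases a <;> cases b <;>
      simp_all (config := { decide := true }) [ADJ, rk', f1]
  · cases a <;> cases i' <;>
      simp_all (config := { decide := true }) [ADJ, rk', f1]
  · cases i <;> cases b <;>
      simp_all (config := { decide := true }) [ADJ, rk', f1]
  · rcases eq_or_ne k k' with rfl | hkk <;> cases i <;> cases i' <;>
      simp_all (config := { decide := true }) [ADJ, rk', f1]

lemma stableW2 (j ℓ : ℕ) : ∀ a b : W j,
    ¬ (ADJ j ℓ a b ∧ rk' j ℓ a b < rk' j ℓ a (f2 j a) ∧ rk' j ℓ b a < rk' j ℓ b (f2 j b)) := by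
  rintro (a | ⟨k, i⟩) (b | ⟨k', i'⟩) ⟨⟨hne, h1, h2⟩, hb1, hb2⟩
  · cases a <;> cases b <;>
      simp_all (config := { decide := true }) [ADJ, rk', f2]
  · cases a <;> cases i' <;>
      simp_all (config := { decide := true }) [ADJ, rk', f2]
  · cases i <;> cases b <;>
      simp_all (config := { decide := true }) [ADJ, rk', f2]
  · rcases eq_or_ne k k' with rfl | hkk <;> cases i <;> cases i' <;>
      simp_all (config := { decide := true }) [ADJ, rk', f2]

lemma stable_M1 (j ℓ : ℕ) : Stable (Hg j ℓ) (rkF j ℓ) (M1 j ℓ) := by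
  intro v u ⟨hadj, h1, h2⟩
  refine stableW1 j ℓ ((eW j).symm v) ((eW j).symm u) ⟨hadj, ?_, ?_⟩
  · simpa [M1, rkF] using h1
  · simpa [M1, rkF] using h2

lemma stable_M2 (j ℓ : ℕ) : Stable (Hg j ℓ) (rkF j ℓ) (M2 j ℓ) := by
  intro v u ⟨hadj, h1, h2⟩
  refine stableW2 j ℓ ((eW j).symm v) ((eW j).symm u) ⟨hadj, ?_, ?_⟩
  · simpa [M2, rkF] using h1
  · simpa [M2, rkF] using h2

section NBR
variable {j ℓ : ℕ}

lemma nbr_c {b : W j} (h : ADJ j ℓ (.inl .c) b) : b = .inl .w := by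
  obtain ⟨hne, h1, h2⟩ := h
  rcases b with bc | ⟨k', i'⟩
  · cases bc <;> simp_all (config := { decide := true }) [ADJ, rk']
  · cases i' <;> simp_all (config := { decide := true }) [ADJ, rk']

lemma nbr_w {b : W j} (h : ADJ j ℓ (.inl .w) b) : b = .inl .c ∨ b = .inl .p := by
  obtain ⟨hne, h1, h2⟩ := h
  rcases b with bc | ⟨k', i'⟩
  · cases bc <;> simp_all (config := { decide := true }) [ADJ, rk']
  · cases i' <;> simp_all (config := { decide := true }) [ADJ, rk']

lemma nbr_p {b : W j} (h : ADJ j ℓ (.inl .p) b) :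
    b = .inl .w ∨ b = .inl .g ∨ ∃ k, b = .inr (k, .pa) := by
  obtain ⟨hne, h1, h2⟩ := h
  rcases b with bc | ⟨k', i'⟩
  · cases bc <;> simp_all (config := { decide := true }) [ADJ, rk']
  · cases i' <;> simp_all (config := { decide := true }) [ADJ, rk']

lemma nbr_g {b : W j} (h : ADJ j ℓ (.inl .g) b) : b = .inl .p ∨ b = .inl .h := by
  obtain ⟨hne, h1, h2⟩ := h
  rcases b with bc | ⟨k', i'⟩
  · cases bc <;> simp_all (config := { decide := true }) [ADJ, rk']
  · cases i' <;> simp_all (config := { decide := true }) [ADJ, rk']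

lemma nbr_h {b : W j} (h : ADJ j ℓ (.inl .h) b) : b = .inl .g := by
  obtain ⟨hne, h1, h2⟩ := h
  rcases b with bc | ⟨k', i'⟩
  · cases bc <;> simp_all (config := { decide := true }) [ADJ, rk']
  · cases i' <;> simp_all (config := { decide := true }) [ADJ, rk']

lemma nbr_pa {k : Fin j} {b : W j} (h : ADJ j ℓ (.inr (k, .pa)) b) :
    b = .inl .p ∨ b = .inr (k, .px) ∨ b = .inr (k, .py) := by
  obtain ⟨hne, h1, h2⟩ := h
  rcases b with bc | ⟨k', i'⟩
  · cases bc <;> simp_all (config := { decide := true }) [ADJ, rk']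
  · rcases eq_or_ne k' k with rfl | hk <;> cases i' <;>
      simp_all (config := { decide := true }) [ADJ, rk']

lemma nbr_px {k : Fin j} {b : W j} (h : ADJ j ℓ (.inr (k, .px)) b) :
    b = .inr (k, .pa) ∨ b = .inr (k, .pz) := by
  obtain ⟨hne, h1, h2⟩ := h
  rcases b with bc | ⟨k', i'⟩
  · cases bc <;> simp_all (config := { decide := true }) [ADJ, rk']
  · rcases eq_or_ne k' k with rfl | hk <;> cases i' <;>
      simp_all (config := { decide := true }) [ADJ, rk']

lemma nbr_py {k : Fin j} {b : W j} (h : ADJ j ℓ (.inr (k, .py)) b) :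
    b = .inr (k, .pa) := by
  obtain ⟨hne, h1, h2⟩ := h
  rcases b with bc | ⟨k', i'⟩
  · cases bc <;> simp_all (config := { decide := true }) [ADJ, rk']
  · rcases eq_or_ne k' k with rfl | hk <;> cases i' <;>
      simp_all (config := { decide := true }) [ADJ, rk']

lemma nbr_pz {k : Fin j} {b : W j} (h : ADJ j ℓ (.inr (k, .pz)) b) :
    b = .inr (k, .px) := by
  obtain ⟨hne, h1, h2⟩ := h
  rcases b with bc | ⟨k', i'⟩
  · cases bc <;> simp_all (config := { decide := true }) [ADJ, rk']
  · rcases eq_or_ne k' k with rfl | hk <;> cases i' <;>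
      simp_all (config := { decide := true }) [ADJ, rk']

end NBR

section Forcing
variable {j ℓ : ℕ}

lemma forcing (M : Matching (Hg j ℓ)) (hst : Stable (Hg j ℓ) (rkF j ℓ) M)
    (he : s(eW j (.inl .c), eW j (.inl .w)) ∉ M.edgeSet) :
    ∀ a : W j, M.partner (eW j a) = eW j (f1 j a) := by
  set pW : W j → W j := fun a => (eW j).symm (M.partner (eW j a)) with hpW
  have hpart : ∀ a, M.partner (eW j a) = eW j (pW a) := by
    intro a; simp [hpW]
  have hinv : ∀ a, pW (pW a) = a := by
    intro a; simp [hpW, M.involutive]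
  have hAdj : ∀ a, pW a ≠ a → ADJ j ℓ a (pW a) := by
    intro a ha
    have h1 : M.partner (eW j a) ≠ eW j a := by
      rw [hpart]; exact fun hx => ha ((eW j).injective hx)
    have h2 := M.adj_of_ne (eW j a) h1
    have h3 : (Hg j ℓ).Adj (eW j a) (eW j (pW a)) := by rwa [hpart] at h2
    simpa using h3
  have hstW : ∀ a b : W j,
      ¬ (ADJ j ℓ a b ∧ rk' j ℓ a b < rk' j ℓ a (pW a) ∧ rk' j ℓ b a < rk' j ℓ b (pW b)) := by
    intro a b ⟨h1, h2, h3⟩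
    refine hst (eW j a) (eW j b) ⟨by simpa using h1, ?_, ?_⟩
    · rw [hpart]; simpa using h2
    · rw [hpart]; simpa using h3
  -- c is unmatched
  have hc : pW (.inl .c) = .inl .c := by
    by_contra h
    have h2 := nbr_c (hAdj _ h)
    apply he
    refine ⟨eW j (.inl .c), ?_, ?_⟩
    · rw [hpart, h2]
      exact fun hx => (by simp : (Sum.inl Core.w : W j) ≠ .inl .c) ((eW j).injective hx)
    · rw [hpart, h2]
  -- w is matched to p
  have hw : pW (.inl .w) = .inl .p := by
    rcases eq_or_ne (pW (.inl .w)) (.inl .w) with h | h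
    · exfalso
      refine hstW (.inl .c) (.inl .w) ⟨⟨by simp, ?_, ?_⟩, ?_, ?_⟩
      · simp [rk']
      · simp [rk']; try decide
      · rw [hc, rk'_self]
        exact Ne.lt_top (by simp [rk'])
      · rw [h, rk'_self]
        simp [rk']; try decide
    · rcases nbr_w (hAdj _ h) with h2 | h2
      · exfalso
        have := hinv (.inl .w)
        rw [h2, hc] at this
        exact (by simp : (Sum.inl Core.c : W j) ≠ .inl .w) this
      · exact h2
  have hp : pW (.inl .p) = .inl .w := by
    have := hinv (.inl .w); rwa [hw] at this
  -- g is matched to h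
  have hg : pW (.inl .g) = .inl .h := by
    rcases eq_or_ne (pW (.inl .g)) (.inl .g) with h | h
    · exfalso
      have hh2 : pW (.inl .h) = .inl .h := by
        rcases eq_or_ne (pW (.inl .h)) (.inl .h) with h' | h'
        · exact h'
        · exfalso
          have h3 := nbr_h (hAdj _ h')
          have := hinv (.inl .h)
          rw [h3, h] at this
          exact (by simp : (Sum.inl Core.g : W j) ≠ .inl .h) this
      refine hstW (.inl .g) (.inl .h) ⟨⟨by simp, ?_, ?_⟩, ?_, ?_⟩
      · simp [rk']; try decide
      · simp [rk']; try decide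
      · rw [h, rk'_self]; simp [rk']; try decide
      · rw [hh2, rk'_self]; simp [rk']; try decide
    · rcases nbr_g (hAdj _ h) with h2 | h2
      · exfalso
        have := hinv (.inl .g)
        rw [h2, hp] at this
        exact (by simp : (Sum.inl Core.w : W j) ≠ .inl .g) this
      · exact h2
  have hh : pW (.inl .h) = .inl .g := by
    have := hinv (.inl .g); rwa [hg] at this
  -- each α is matched to x
  have hpa : ∀ k : Fin j, pW (.inr (k, .pa)) = .inr (k, .px) := by
    intro k
    rcases eq_or_ne (pW (.inr (k, .pa))) (.inr (k, .pa)) with h | h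
    · exfalso
      refine hstW (.inl .p) (.inr (k, .pa)) ⟨⟨by simp, ?_, ?_⟩, ?_, ?_⟩
      · simp [rk']; try decide
      · simp [rk']; try decide
      · rw [hp]; simp [rk']; try decide
      · rw [h, rk'_self]; simp [rk']; try decide
    · rcases nbr_pa (hAdj _ h) with h2 | h2 | h2
      · exfalso
        have := hinv (.inr (k, .pa))
        rw [h2, hp] at this
        simp at this
      · exact h2
      · exfalso
        refine hstW (.inl .p) (.inr (k, .pa)) ⟨⟨by simp, ?_, ?_⟩, ?_, ?_⟩
        · simp [rk']; try decide
        · simp [rk']; try decide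
        · rw [hp]; simp [rk']; try decide
        · rw [h2]; simp [rk']; try decide
    
  have hpx : ∀ k : Fin j, pW (.inr (k, .px)) = .inr (k, .pa) := by
    intro k
    have := hinv (.inr (k, .pa)); rw [hpa k] at this; exact this
  have hpy : ∀ k : Fin j, pW (.inr (k, .py)) = .inr (k, .py) := by
    intro k
    rcases eq_or_ne (pW (.inr (k, .py))) (.inr (k, .py)) with h | h
    · exact h
    · exfalso
      have h2 := nbr_py (hAdj _ h)
      have := hinv (.inr (k, .py))
      rw [h2, hpa k] at this
      simp at this
  have hpz : ∀ k : Fin j, pW (.inr (k, .pz)) = .inr (k, .pz) := by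
    intro k
    rcases eq_or_ne (pW (.inr (k, .pz))) (.inr (k, .pz)) with h | h
    · exact h
    · exfalso
      have h2 := nbr_pz (hAdj _ h)
      have := hinv (.inr (k, .pz))
      rw [h2, hpx k] at this
      simp at this
  rintro (a | ⟨k, i⟩)
  · cases a
    · rw [hpart, hc]; rfl
    · rw [hpart, hw]; rfl
    · rw [hpart, hp]; rfl
    · rw [hpart, hg]; rfl
    · rw [hpart, hh]; rfl
  · cases i
    · rw [hpart, hpa]; rfl
    · rw [hpart, hpx]; rfl
    · rw [hpart, hpy]; rfl
    · rw [hpart, hpz]; rfl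

end Forcing

section Counting

/-- generic matching size bound -/
lemma two_mul_ncard_le {V : Type} [Fintype V] [LinearOrder V] {G : SimpleGraph V}
    (M : Matching G) : 2 * M.edgeSet.ncard ≤ Fintype.card V := by
  classical
  set A := Finset.univ.filter (fun v => v < M.partner v) with hA
  set B := Finset.univ.filter (fun v => M.partner v < v) with hB
  have hset : M.edgeSet = ↑(A.image (fun v => s(v, M.partner v))) := by
    ext e; constructor
    · rintro ⟨v, hv, rfl⟩
      rcases hv.lt_or_gt with h | h
      · refine Finset.mem_coe.mpr (Finset.mem_image.mpr ⟨M.partner v, ?_, ?_⟩)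
        · simp only [hA, Finset.mem_filter, Finset.mem_univ, true_and, M.involutive]
          exact h
        · rw [M.involutive]; exact Sym2.eq_swap
      · exact Finset.mem_coe.mpr (Finset.mem_image.mpr
          ⟨v, by simp only [hA, Finset.mem_filter, Finset.mem_univ, true_and]; exact h, rfl⟩)
    · intro he
      obtain ⟨v, hv, rfl⟩ := Finset.mem_image.mp (Finset.mem_coe.mp he)
      simp only [hA, Finset.mem_filter, Finset.mem_univ, true_and] at hv
      exact ⟨v, ne_of_gt hv, rfl⟩
  rw [hset, Set.ncard_coe_finset]
  have hcard : (A.image fun v => s(v, M.partner v)).card ≤ A.card := Finset.card_image_le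
  have hAB : A.card = B.card := by
    refine Finset.card_bij (fun v _ => M.partner v) ?_ ?_ ?_
    · intro a ha
      simp only [hA, Finset.mem_filter, Finset.mem_univ, true_and] at ha
      simp only [hB, Finset.mem_filter, Finset.mem_univ, true_and, M.involutive]
      exact ha
    · intro a _ b _ h
      have := congrArg M.partner h
      rwa [M.involutive, M.involutive] at this
    · intro b hb
      simp only [hB, Finset.mem_filter, Finset.mem_univ, true_and] at hb
      refine ⟨M.partner b, ?_, (M.involutive b)⟩
      simp only [hA, Finset.mem_filter, Finset.mem_univ, true_and, M.involutive]
      exact hb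
  have hdisj : Disjoint A B := by
    rw [Finset.disjoint_left]
    intro a ha hb
    simp only [hA, Finset.mem_filter, Finset.mem_univ, true_and] at ha
    simp only [hB, Finset.mem_filter, Finset.mem_univ, true_and] at hb
    exact absurd (ha.trans hb) (lt_irrefl a)
  have hle : A.card + B.card ≤ Fintype.card V := by
    rw [← Finset.card_union_of_disjoint hdisj]
    simpa using Finset.card_le_univ (A ∪ B)
  omega

variable (j ℓ : ℕ)

def E1 : Bool ⊕ Fin j → Sym2 (Fin (4*j+5))
  | .inl true => s(eW j (.inl .w), eW j (.inl .p))
  | .inl false => s(eW j (.inl .g), eW j (.inl .h))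
  | .inr k => s(eW j (.inr (k, .pa)), eW j (.inr (k, .px)))

def E2 : Bool ⊕ (Fin j × Bool) → Sym2 (Fin (4*j+5))
  | .inl true => s(eW j (.inl .c), eW j (.inl .w))
  | .inl false => s(eW j (.inl .p), eW j (.inl .g))
  | .inr (k, true) => s(eW j (.inr (k, .pa)), eW j (.inr (k, .py)))
  | .inr (k, false) => s(eW j (.inr (k, .px)), eW j (.inr (k, .pz)))

lemma E1_inj : Function.Injective (E1 j) := by
  rintro (b1 | k1) (b2 | k2) h <;>
    [cases b1 <;> cases b2; cases b1; cases b2; skip] <;>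
    simp_all [E1, Sym2.eq_iff, Equiv.apply_eq_iff_eq]

lemma E2_inj : Function.Injective (E2 j) := by
  rintro (b1 | ⟨k1, c1⟩) (b2 | ⟨k2, c2⟩) h <;>
    [cases b1 <;> cases b2; (cases b1 <;> cases c2); (cases c1 <;> cases b2); (cases c1 <;> cases c2)] <;>
    simp_all [E2, Sym2.eq_iff, Equiv.apply_eq_iff_eq]

lemma edgeSet_M1 : (M1 j ℓ).edgeSet = Set.range (E1 j) := by
  ext e; constructor
  · rintro ⟨v, hv, rfl⟩
    obtain ⟨a, rfl⟩ := (eW j).surjective v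
    have hp : (M1 j ℓ).partner (eW j a) = eW j (f1 j a) := by simp [M1]
    rw [hp] at hv ⊢
    rcases a with (ac | ⟨k, i⟩)
    · cases ac
      · exact (hv rfl).elim
      · exact ⟨.inl true, rfl⟩
      · exact ⟨.inl true, by simp only [E1, f1]; exact Sym2.eq_swap⟩
      · exact ⟨.inl false, rfl⟩
      · exact ⟨.inl false, by simp only [E1, f1]; exact Sym2.eq_swap⟩
    · cases i
      · exact ⟨.inr k, rfl⟩
      · exact ⟨.inr k, by simp only [E1, f1]; exact Sym2.eq_swap⟩
      · exact (hv rfl).elim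
      · exact (hv rfl).elim
  · rintro ⟨z, rfl⟩
    rcases z with (b | k)
    · cases b
      · exact ⟨eW j (.inl .g), by simp [M1, f1], by simp [M1, f1, E1]⟩
      · exact ⟨eW j (.inl .w), by simp [M1, f1], by simp [M1, f1, E1]⟩
    · exact ⟨eW j (.inr (k, .pa)), by simp [M1, f1], by simp [M1, f1, E1]⟩

lemma edgeSet_M2 : (M2 j ℓ).edgeSet = Set.range (E2 j) := by
  ext e; constructor
  · rintro ⟨v, hv, rfl⟩
    obtain ⟨a, rfl⟩ := (eW j).surjective v
    have hp : (M2 j ℓ).partner (eW j a) = eW j (f2 j a) := by simp [M2]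
    rw [hp] at hv ⊢
    rcases a with (ac | ⟨k, i⟩)
    · cases ac
      · exact ⟨.inl true, rfl⟩
      · exact ⟨.inl true, by simp only [E2, f2]; exact Sym2.eq_swap⟩
      · exact ⟨.inl false, rfl⟩
      · exact ⟨.inl false, by simp only [E2, f2]; exact Sym2.eq_swap⟩
      · exact (hv rfl).elim
    · cases i
      · exact ⟨.inr (k, true), rfl⟩
      · exact ⟨.inr (k, false), rfl⟩
      · exact ⟨.inr (k, true), by simp only [E2, f2]; exact Sym2.eq_swap⟩
      · exact ⟨.inr (k, false), by simp only [E2, f2]; exact Sym2.eq_swap⟩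
  · rintro ⟨z, rfl⟩
    rcases z with (b | ⟨k, cb⟩)
    · cases b
      · exact ⟨eW j (.inl .p), by simp [M2, f2], by simp [M2, f2, E2]⟩
      · exact ⟨eW j (.inl .c), by simp [M2, f2], by simp [M2, f2, E2]⟩
    · cases cb
      · exact ⟨eW j (.inr (k, .px)), by simp [M2, f2], by simp [M2, f2, E2]⟩
      · exact ⟨eW j (.inr (k, .pa)), by simp [M2, f2], by simp [M2, f2, E2]⟩

lemma ncard_M1 : (M1 j ℓ).edgeSet.ncard = j + 2 := by
  rw [edgeSet_M1, ← Set.image_univ, Set.ncard_image_of_injective _ (E1_inj j),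
    Set.ncard_univ, Nat.card_eq_fintype_card]
  simp; omega

lemma ncard_M2 : (M2 j ℓ).edgeSet.ncard = 2 * j + 2 := by
  rw [edgeSet_M2, ← Set.image_univ, Set.ncard_image_of_injective _ (E2_inj j),
    Set.ncard_univ, Nat.card_eq_fintype_card]
  simp; omega

lemma e_not_mem_M1 : s(eW j (.inl .c), eW j (.inl .w)) ∉ (M1 j ℓ).edgeSet := by
  rintro ⟨v, hv, he⟩
  obtain ⟨a, rfl⟩ := (eW j).surjective v
  have hp : (M1 j ℓ).partner (eW j a) = eW j (f1 j a) := by simp [M1]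
  rw [hp] at hv he
  rw [Sym2.eq_iff] at he
  rcases he with ⟨h1, h2⟩ | ⟨h1, h2⟩
  · have h1' := (eW j).injective h1
    have h2' := (eW j).injective h2
    subst h1'
    simp [f1] at h2'
  · have h1' := (eW j).injective h2
    have h2' := (eW j).injective h1
    subst h1'
    simp [f1] at h2'

lemma e_mem_M2 : s(eW j (.inl .c), eW j (.inl .w)) ∈ (M2 j ℓ).edgeSet := by
  refine ⟨eW j (.inl .c), ?_, ?_⟩ <;> simp [M2, f2]

end Counting

section SuppressLemma
variable {A : Type} [Fintype A]

lemma mult_le_deg (M : Multigraph A) (v y : A) : M.mult s(v, y) ≤ M.deg v := by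
  calc M.mult s(v, y) ≤ ∑ z : A, M.mult s(v, z) :=
        Finset.single_le_sum (f := fun z => M.mult s(v, z))
          (fun _ _ => Nat.zero_le _) (Finset.mem_univ y)
    _ ≤ M.deg v := Nat.le_add_right _ _

lemma suppress_mult_of_deg_le_one (M : Multigraph A) (v : A) (h : M.deg v ≤ 1)
    (e : Sym2 A) : (M.suppress v).mult e = if v ∈ e then 0 else M.mult e := by
  induction e using Sym2.ind with
  | _ x y =>
    show Sym2.lift _ s(x, y) = _
    rw [Sym2.lift_mk]
    dsimp only
    by_cases hxy : x = v ∨ y = v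
    · have hmem : v ∈ s(x, y) := by rw [Sym2.mem_iff]; tauto
      rw [if_pos hxy, if_pos hmem]
    · have hmem : ¬ v ∈ s(x, y) := by rw [Sym2.mem_iff]; tauto
      rw [if_neg hxy, if_neg hmem]
      have hx : x ≠ v := fun hc => hxy (Or.inl hc)
      have hy : y ≠ v := fun hc => hxy (Or.inr hc)
      rcases eq_or_ne x y with rfl | hne
      · rw [if_pos (rfl : x = x)]
        have h2 : M.mult s(v, x) ≠ 2 := by
          have := mult_le_deg M v x
          omega
        rw [if_neg h2]
        omega
      · rw [if_neg hne]
        have hprod : min (M.mult s(v, x)) 1 * min (M.mult s(v, y)) 1 = 0 := by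
          rcases Nat.eq_zero_or_pos (M.mult s(v, x)) with h0 | hpos
          · rw [h0]; simp
          rcases Nat.eq_zero_or_pos (M.mult s(v, y)) with h0 | hpos'
          · rw [h0]; simp
          exfalso
          have h2 : M.mult s(v, x) + M.mult s(v, y) ≤ ∑ z : A, M.mult s(v, z) := by
            have hsub : ({x, y} : Finset A) ⊆ Finset.univ := Finset.subset_univ _
            calc M.mult s(v, x) + M.mult s(v, y)
                = ∑ z ∈ ({x, y} : Finset A), M.mult s(v, z) := by
                  rw [Finset.sum_pair hne]
              _ ≤ ∑ z : A, M.mult s(v, z) :=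
                  Finset.sum_le_sum_of_subset hsub
          have := Nat.le_add_right (∑ z : A, M.mult s(v, z)) (M.mult s(v, v))
          have hdeg : M.mult s(v, x) + M.mult s(v, y) ≤ M.deg v := le_trans h2 this
          omega
        rw [hprod]
        omega

end SuppressLemma

section TCW
variable (j ℓ : ℕ)

abbrev Vp := {x : Fin (4*j+5) // x ≠ eW j (.inl .c)}

abbrev Gg := SimpleGraph.comap (Subtype.val : Vp j → Fin (4*j+5)) (Hg j ℓ)

def D : TreeCutDecomp PUnit (Vp j) where
  T := ⊥
  connected := by
    rw [SimpleGraph.connected_iff_exists_forall_reachable]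
    refine ⟨(), fun u => ?_⟩
    cases u
    exact SimpleGraph.Reachable.refl _
  acyclic := by
    intro v p hp
    cases p with
    | nil => exact hp.ne_nil rfl
    | cons h _ => exact h.elim
  root := ()
  bag _ := Set.univ
  bag_disjoint s t hst := absurd (Subsingleton.elim s t) hst
  bag_cover v := ⟨(), Set.mem_univ v⟩

lemma mem_Yset (v : Vp j) : v ∈ (D j).Yset () := by
  refine ⟨(), ?_, Set.mem_univ v⟩
  intro p
  exact p.start_mem_support

lemma adh_eq_zero : (D j).adh (Gg j ℓ) () = 0 := by
  have hset : {e : Sym2 (Vp j) | e ∈ (Gg j ℓ).edgeSet ∧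
      ∃ x y : Vp j, e = s(x, y) ∧ x ∈ (D j).Yset () ∧ y ∉ (D j).Yset ()} = ∅ := by
    ext e
    simp only [Set.mem_setOf_eq, Set.mem_empty_iff_false, iff_false, not_and]
    rintro _ ⟨x, y, _, _, hy⟩
    exact hy (mem_Yset j y)
  unfold TreeCutDecomp.adh
  rw [hset, Set.ncard_empty]

lemma proj_eq : (D j).proj () = Sum.inl := by
  funext v
  unfold TreeCutDecomp.proj
  exact if_pos (Set.mem_univ v)

lemma map_inl_eq {α : Type} {f : Sym2 α} {a b : α} :
    Sym2.map (Sum.inl : α → α ⊕ PUnit) f = s(Sum.inl a, Sum.inl b) ↔ f = s(a, b) := by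
  induction f using Sym2.ind with
  | _ p q =>
    rw [Sym2.map_pair_eq, Sym2.eq_iff, Sym2.eq_iff]
    simp only [Sum.inl.injEq]

lemma tm_inl (u v : Vp j) :
    ((D j).torso (Gg j ℓ) ()).mult s(.inl u, .inl v) =
      if (Gg j ℓ).Adj u v then 1 else 0 := by
  show Set.ncard _ = _
  simp only [proj_eq]
  by_cases h : (Gg j ℓ).Adj u v
  · rw [if_pos h]
    have hset : {f : Sym2 (Vp j) | f ∈ (Gg j ℓ).edgeSet ∧
        Sym2.map (Sum.inl : Vp j → Vp j ⊕ PUnit) f = s(Sum.inl u, Sum.inl v) ∧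
        ¬ (Sym2.map (Sum.inl : Vp j → Vp j ⊕ PUnit) f).IsDiag} = {s(u, v)} := by
      ext f
      simp only [Set.mem_setOf_eq, Set.mem_singleton_iff]
      constructor
      · rintro ⟨_, hmap, _⟩
        exact map_inl_eq.mp hmap
      · rintro rfl
        refine ⟨(SimpleGraph.mem_edgeSet _).mpr h, by rw [Sym2.map_pair_eq], ?_⟩
        rw [Sym2.map_pair_eq, Sym2.mk_isDiag_iff]
        simp only [Sum.inl.injEq]
        exact h.ne
    rw [hset, Set.ncard_singleton]
  · rw [if_neg h]
    have hset : {f : Sym2 (Vp j) | f ∈ (Gg j ℓ).edgeSet ∧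
        Sym2.map (Sum.inl : Vp j → Vp j ⊕ PUnit) f = s(Sum.inl u, Sum.inl v) ∧
        ¬ (Sym2.map (Sum.inl : Vp j → Vp j ⊕ PUnit) f).IsDiag} = ∅ := by
      ext f
      simp only [Set.mem_setOf_eq, Set.mem_empty_iff_false, iff_false, not_and]
      intro hE hmap
      exfalso
      have := map_inl_eq.mp hmap
      subst this
      exact h ((SimpleGraph.mem_edgeSet _).mp hE)
    rw [hset, Set.ncard_empty]

lemma tm_inr (x : Vp j ⊕ PUnit) (t : PUnit) :
    ((D j).torso (Gg j ℓ) ()).mult s(x, .inr t) = 0 := by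
  show Set.ncard _ = 0
  simp only [proj_eq]
  have hset : {f : Sym2 (Vp j) | f ∈ (Gg j ℓ).edgeSet ∧
      Sym2.map (Sum.inl : Vp j → Vp j ⊕ PUnit) f = s(x, .inr t) ∧
      ¬ (Sym2.map (Sum.inl : Vp j → Vp j ⊕ PUnit) f).IsDiag} = ∅ := by
    ext f
    simp only [Set.mem_setOf_eq, Set.mem_empty_iff_false, iff_false, not_and]
    intro _ hmap
    exfalso
    induction f using Sym2.ind with
    | _ p q =>
      rw [Sym2.map_pair_eq, Sym2.eq_iff] at hmap
      rcases hmap with ⟨h1, h2⟩ | ⟨h1, h2⟩ <;> simp at h1 h2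
  rw [hset, Set.ncard_empty]

lemma tm_le_one (e : Sym2 (Vp j ⊕ PUnit)) :
    ((D j).torso (Gg j ℓ) ()).mult e ≤ 1 := by
  induction e using Sym2.ind with
  | _ p q =>
    rcases q with u | t
    · rcases p with u' | t'
      · rw [tm_inl]
        split_ifs <;> omega
      · rw [Sym2.eq_swap, tm_inr]
        omega
    · rw [tm_inr]
      omega

lemma torso_verts :
    ((D j).torso (Gg j ℓ) ()).verts = Sum.inl '' (Set.univ : Set (Vp j)) := by
  show (Sum.inl '' (Set.univ : Set (Vp j))) ∪
      (Sum.inr '' ((⊥ : SimpleGraph PUnit).neighborSet ())) = _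
  simp [SimpleGraph.neighborSet]

end TCW

section Steps
variable (j ℓ : ℕ)

/-- the vertex of `Vp` corresponding to `a : W j`, `a ≠ c`. -/
def vt (a : W j) (ha : a ≠ .inl .c) : Vp j :=
  ⟨eW j a, fun h => ha ((eW j).injective h)⟩

def SV (Sw : Set (W j)) : Set (Vp j) := {v | (eW j).symm v.val ∈ Sw}

lemma mem_SV {Sw : Set (W j)} {a : W j} (ha : a ≠ .inl .c) :
    vt j a ha ∈ SV j Sw ↔ a ∈ Sw := by
  simp [SV, vt]

lemma SV_union_singleton (Sw : Set (W j)) (a : W j) (ha : a ≠ .inl .c) :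
    SV j (Sw ∪ {a}) = SV j Sw ∪ {vt j a ha} := by
  ext v
  simp only [SV, Set.mem_union, Set.mem_singleton_iff, Set.mem_setOf_eq]
  constructor
  · rintro (h | h)
    · exact Or.inl h
    · right
      have : v.val = eW j a := by
        have := congrArg (eW j) h
        simpa using this
      exact Subtype.ext this
  · rintro (h | h)
    · exact Or.inl h
    · right
      rw [h]
      simp [vt]

def Inv (Sw : Set (W j)) (M : Multigraph (Vp j ⊕ PUnit)) : Prop :=
  M.verts = Sum.inl '' (SV j Sw)ᶜ ∧
  ∀ e, M.mult e = if ∃ u ∈ SV j Sw, (Sum.inl u) ∈ e then 0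
    else ((D j).torso (Gg j ℓ) ()).mult e

lemma Inv_base : Inv j ℓ ∅ ((D j).torso (Gg j ℓ) ()) := by
  constructor
  · rw [torso_verts]
    congr 1
    simp [SV]
  · intro e
    rw [if_neg]
    rintro ⟨u, hu, -⟩
    simp [SV] at hu

lemma Inv_mult_le_one {Sw : Set (W j)} {M : Multigraph (Vp j ⊕ PUnit)}
    (h : Inv j ℓ Sw M) (e : Sym2 (Vp j ⊕ PUnit)) : M.mult e ≤ 1 := by
  rw [h.2]
  split_ifs
  · omega
  · exact tm_le_one j ℓ e

lemma Inv_mult_inr {Sw : Set (W j)} {M : Multigraph (Vp j ⊕ PUnit)}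
    (h : Inv j ℓ Sw M) (x : Vp j ⊕ PUnit) (t : PUnit) : M.mult s(x, .inr t) = 0 := by
  rw [h.2]
  split_ifs
  · rfl
  · exact tm_inr j ℓ x t

lemma step (Sw : Set (W j)) (M : Multigraph (Vp j ⊕ PUnit)) (hInv : Inv j ℓ Sw M)
    (a : W j) (ha : a ≠ .inl .c) (haS : a ∉ Sw)
    (b₀ : W j) (hb₀ : b₀ ≠ .inl .c)
    (hnb : ∀ b : W j, ADJ j ℓ a b → b ≠ .inl .c → b ≠ b₀ → b ∈ Sw) :
    Multigraph.SuppressStep M (M.suppress (Sum.inl (vt j a ha))) ∧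
      Inv j ℓ (Sw ∪ {a}) (M.suppress (Sum.inl (vt j a ha))) := by
  have hdiag : M.mult s(Sum.inl (vt j a ha), Sum.inl (vt j a ha)) = 0 := by
    rw [hInv.2]
    split_ifs with h
    · rfl
    · rw [tm_inl]
      rw [if_neg (SimpleGraph.irrefl _)]
  have hsum : ∀ y : Vp j ⊕ PUnit, y ≠ Sum.inl (vt j b₀ hb₀) →
      M.mult s(Sum.inl (vt j a ha), y) = 0 := by
    rintro (u | t) hy
    · by_cases hu : u ∈ SV j Sw
      · rw [hInv.2, if_pos ⟨u, hu, by rw [Sym2.mem_iff]; right; rfl⟩]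
      · rw [hInv.2, if_neg, tm_inl, if_neg]
        · -- u is not adjacent to a
          intro hadj
          have hbc : (eW j).symm u.val ≠ Sum.inl Core.c := by
            intro hc
            apply u.2
            have := congrArg (eW j) hc
            simpa using this
          have hADJ : ADJ j ℓ a ((eW j).symm u.val) := by
            have : (Hg j ℓ).Adj (vt j a ha).val u.val := hadj
            simpa [vt, Hg, SimpleGraph.Adj] using this
          have hbb : (eW j).symm u.val ≠ b₀ := by
            intro hb
            apply hy
            congr 1
            apply Subtype.ext
            show u.val = eW j b₀
            rw [← hb]
            simp
          have := hnb _ hADJ hbc hbb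
          exact hu this
        · rintro ⟨u', hu', hmem⟩
          rw [Sym2.mem_iff] at hmem
          rcases hmem with h | h
          · rw [Sum.inl.injEq] at h
            subst h
            rw [mem_SV] at hu'
            exact haS hu'
          · rw [Sum.inl.injEq] at h
            subst h
            exact hu hu'
    · exact Inv_mult_inr j ℓ hInv _ t
  have hdeg : M.deg (Sum.inl (vt j a ha)) ≤ 1 := by
    unfold Multigraph.deg
    rw [hdiag]
    rw [Fintype.sum_eq_single (Sum.inl (vt j b₀ hb₀)) (fun y hy => hsum y hy)]
    have := Inv_mult_le_one j ℓ hInv s(Sum.inl (vt j a ha), Sum.inl (vt j b₀ hb₀))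
    omega
  have hmem_verts : Sum.inl (vt j a ha) ∈ M.verts := by
    rw [hInv.1]
    exact ⟨vt j a ha, by rw [Set.mem_compl_iff, mem_SV]; exact haS, rfl⟩
  refine ⟨⟨Sum.inl (vt j a ha), hmem_verts, le_trans hdeg (by omega), rfl⟩, ?_, ?_⟩
  · show M.verts \ {Sum.inl (vt j a ha)} = _
    rw [hInv.1, SV_union_singleton j Sw a ha]
    ext z
    simp only [Set.mem_diff, Set.mem_image, Set.mem_compl_iff, Set.mem_singleton_iff,
      Set.mem_union]
    constructor
    · rintro ⟨⟨u, hu, rfl⟩, hz⟩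
      refine ⟨u, ?_, rfl⟩
      intro hc
      rcases hc with hc | hc
      · exact hu hc
      · exact hz (by rw [hc])
    · rintro ⟨u, hu, rfl⟩
      refine ⟨⟨u, fun hc => hu (Or.inl hc), rfl⟩, ?_⟩
      intro hc
      rw [Sum.inl.injEq] at hc
      exact hu (Or.inr hc)
  · intro e
    rw [suppress_mult_of_deg_le_one M _ hdeg e]
    by_cases hme : Sum.inl (vt j a ha) ∈ e
    · rw [if_pos hme, if_pos]
      exact ⟨vt j a ha, by rw [SV_union_singleton j Sw a ha]; exact Or.inr rfl, hme⟩
    · rw [if_neg hme, hInv.2]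
      congr 1
      rw [SV_union_singleton j Sw a ha]
      simp only [eq_iff_iff]
      constructor
      · rintro ⟨u, hu, hmem⟩
        exact ⟨u, Or.inl hu, hmem⟩
      · rintro ⟨u, hu, hmem⟩
        rcases hu with hu | hu
        · exact ⟨u, hu, hmem⟩
        · exfalso
          rw [Set.mem_singleton_iff] at hu
          subst hu
          exact hme hmem

end Steps

section Phases
variable (j ℓ : ℕ)

def Sblk (m : ℕ) : Set (W j) := {u | ∃ (k : Fin j) (i : Blk), u = Sum.inr (k, i) ∧ (k : ℕ) < m}

lemma Inv_congr {Sw Sw' : Set (W j)} {M : Multigraph (Vp j ⊕ PUnit)}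
    (h : Inv j ℓ Sw M) (hS : Sw = Sw') : Inv j ℓ Sw' M := hS ▸ h

lemma Sblk_zero : Sblk j 0 = ∅ := by
  ext u
  simp [Sblk]

lemma Sblk_succ (m : ℕ) (hm : m < j) :
    ((({Sum.inl Core.h} ∪ Sblk j m ∪ {Sum.inr (⟨m, hm⟩, Blk.py)}) ∪ {Sum.inr (⟨m, hm⟩, Blk.pz)}
      ∪ {Sum.inr (⟨m, hm⟩, Blk.px)}) ∪ {Sum.inr (⟨m, hm⟩, Blk.pa)})
      = {Sum.inl Core.h} ∪ Sblk j (m + 1) := by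
  ext u
  simp only [Set.mem_union, Set.mem_singleton_iff, Sblk, Set.mem_setOf_eq]
  constructor
  · rintro ((((( h | ⟨k, i, rfl, hk⟩) | rfl) | rfl) | rfl) | rfl)
    · exact Or.inl h
    · exact Or.inr ⟨k, i, rfl, by omega⟩
    all_goals exact Or.inr ⟨⟨m, hm⟩, _, rfl, by simp⟩
  · rintro (h | ⟨k, i, rfl, hk⟩)
    · exact Or.inl (Or.inl (Or.inl (Or.inl (Or.inl h))))
    · rcases Nat.lt_or_ge (k : ℕ) m with h | h
      · exact Or.inl (Or.inl (Or.inl (Or.inl (Or.inr ⟨k, i, rfl, h⟩))))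
      · have hkm : k = ⟨m, hm⟩ := by
          apply Fin.ext
          simp only []
          omega
        subst hkm
        cases i
        · exact Or.inr rfl
        · exact Or.inl (Or.inr rfl)
        · exact Or.inl (Or.inl (Or.inl (Or.inr rfl)))
        · exact Or.inl (Or.inl (Or.inr rfl))

lemma blocks : ∀ m, m ≤ j → ∃ M,
    Relation.ReflTransGen Multigraph.SuppressStep ((D j).torso (Gg j ℓ) ()) M ∧
    Inv j ℓ ({Sum.inl Core.h} ∪ Sblk j m) M := by
  intro m
  induction m with
  | zero =>
    intro _
    have hstep := step j ℓ ∅ _ (Inv_base j ℓ) (.inl .h) (by simp) (Set.notMem_empty _)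
      (.inl .g) (by simp) (fun b hb _ hbne => absurd (nbr_h hb) hbne)
    refine ⟨_, Relation.ReflTransGen.single hstep.1, Inv_congr j ℓ hstep.2 ?_⟩
    rw [Sblk_zero]
    simp
  | succ m ih =>
    intro hm
    obtain ⟨M, hrtg, hInv⟩ := ih (by omega)
    have hmj : m < j := by omega
    -- step 1 : suppress py
    have hs1 := step j ℓ _ _ hInv (.inr (⟨m, hmj⟩, .py)) (by simp)
      (by
        rintro (h | ⟨k, i, hki, hk⟩)
        · simp at h
        · rw [Sum.inr.injEq, Prod.mk.injEq] at hki
          obtain ⟨rfl, -⟩ := hki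
          simp at hk)
      (.inr (⟨m, hmj⟩, .pa)) (by simp)
      (fun b hb _ hbne => absurd (nbr_py hb) hbne)
    -- step 2 : suppress pz
    have hs2 := step j ℓ _ _ hs1.2 (.inr (⟨m, hmj⟩, .pz)) (by simp)
      (by
        rintro ((h | ⟨k, i, hki, hk⟩) | h)
        · simp at h
        · rw [Sum.inr.injEq, Prod.mk.injEq] at hki
          obtain ⟨rfl, -⟩ := hki
          simp at hk
        · simp at h)
      (.inr (⟨m, hmj⟩, .px)) (by simp)
      (fun b hb _ hbne => absurd (nbr_pz hb) hbne)
    -- step 3 : suppress px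
    have hs3 := step j ℓ _ _ hs2.2 (.inr (⟨m, hmj⟩, .px)) (by simp)
      (by
        rintro (((h | ⟨k, i, hki, hk⟩) | h) | h)
        · simp at h
        · rw [Sum.inr.injEq, Prod.mk.injEq] at hki
          obtain ⟨rfl, -⟩ := hki
          simp at hk
        · simp at h
        · simp at h)
      (.inr (⟨m, hmj⟩, .pa)) (by simp)
      (by
        intro b hb _ hbne
        rcases nbr_px hb with h | h
        · exact absurd h hbne
        · subst h
          exact Or.inr rfl)
    -- step 4 : suppress pa
    have hs4 := step j ℓ _ _ hs3.2 (.inr (⟨m, hmj⟩, .pa)) (by simp)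
      (by
        rintro ((((h | ⟨k, i, hki, hk⟩) | h) | h) | h)
        · simp at h
        · rw [Sum.inr.injEq, Prod.mk.injEq] at hki
          obtain ⟨rfl, -⟩ := hki
          simp at hk
        · simp at h
        · simp at h
        · simp at h)
      (.inl .p) (by simp)
      (by
        intro b hb _ hbne
        rcases nbr_pa hb with h | h | h
        · exact absurd h hbne
        · subst h
          exact Or.inr rfl
        · subst h
          exact Or.inl (Or.inl (Or.inr rfl)))
    refine ⟨_, ?_, Inv_congr j ℓ hs4.2 (Sblk_succ j m hmj)⟩
    exact (((hrtg.tail hs1.1).tail hs2.1).tail hs3.1).tail hs4.1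

def Sfin : Set (W j) :=
  (({Sum.inl Core.h} ∪ Sblk j j ∪ {Sum.inl Core.g}) ∪ {Sum.inl Core.p}) ∪ {Sum.inl Core.w}

lemma final_chain : ∃ M,
    Relation.ReflTransGen Multigraph.SuppressStep ((D j).torso (Gg j ℓ) ()) M ∧
    Inv j ℓ (Sfin j) M := by
  obtain ⟨M, hrtg, hInv⟩ := blocks j ℓ j le_rfl
  -- suppress g
  have hs1 := step j ℓ _ _ hInv (.inl .g) (by simp)
    (by
      rintro (h | ⟨k, i, hki, hk⟩)
      · simp at h
      · simp at hki)
    (.inl .p) (by simp)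
    (by
      intro b hb _ hbne
      rcases nbr_g hb with h | h
      · exact absurd h hbne
      · subst h
        exact Or.inl rfl)
  -- suppress p
  have hs2 := step j ℓ _ _ hs1.2 (.inl .p) (by simp)
    (by
      rintro ((h | ⟨k, i, hki, hk⟩) | h)
      · simp at h
      · simp at hki
      · simp at h)
    (.inl .w) (by simp)
    (by
      intro b hb hbc hbne
      rcases nbr_p hb with h | h | ⟨k, h⟩
      · exact absurd h hbne
      · subst h
        exact Or.inr rfl
      · subst h
        exact Or.inl (Or.inr ⟨k, .pa, rfl, k.isLt⟩))
  -- suppress w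
  have hs3 := step j ℓ _ _ hs2.2 (.inl .w) (by simp)
    (by
      rintro (((h | ⟨k, i, hki, hk⟩) | h) | h)
      · simp at h
      · simp at hki
      · simp at h
      · simp at h)
    (.inl .g) (by simp)
    (by
      intro b hb hbc hbne
      rcases nbr_w hb with h | h
      · exact absurd h hbc
      · subst h
        exact Or.inr rfl)
  exact ⟨_, ((hrtg.tail hs1.1).tail hs2.1).tail hs3.1, hs3.2⟩

lemma SV_Sfin_compl : (SV j (Sfin j))ᶜ = ∅ := by
  ext v
  simp only [Set.mem_compl_iff, Set.mem_empty_iff_false, iff_false, not_not]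
  show (eW j).symm v.val ∈ Sfin j
  have hvc : (eW j).symm v.val ≠ Sum.inl Core.c := by
    intro hc
    apply v.2
    have := congrArg (eW j) hc
    simpa using this
  rcases h : (eW j).symm v.val with (cc | ⟨k, i⟩)
  · cases cc
    · exact absurd h hvc
    · exact Or.inr rfl
    · exact Or.inl (Or.inr rfl)
    · exact Or.inl (Or.inl (Or.inr rfl))
    · exact Or.inl (Or.inl (Or.inl (Or.inl rfl)))
  · exact Or.inl (Or.inl (Or.inl (Or.inr ⟨k, i, rfl, k.isLt⟩)))

lemma tor_eq_zero : (D j).tor (Gg j ℓ) () = 0 := by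
  obtain ⟨M, hrtg, hInv⟩ := final_chain j ℓ
  have hverts : M.verts = ∅ := by
    rw [hInv.1, SV_Sfin_compl]
    simp
  have h0 : (0 : ℕ) ∈ {n | ∃ M' : Multigraph (Vp j ⊕ PUnit),
      Relation.ReflTransGen Multigraph.SuppressStep ((D j).torso (Gg j ℓ) ()) M' ∧
      M'.Reduced ∧ n = M'.verts.ncard} := by
    refine ⟨M, hrtg, ?_, ?_⟩
    · intro v hv
      rw [hverts] at hv
      exact absurd hv (Set.notMem_empty v)
    · rw [hverts, Set.ncard_empty]
  exact Nat.le_zero.mp (Nat.sInf_le h0)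

lemma width_le : (D j).width (Gg j ℓ) ≤ 4 := by
  unfold TreeCutDecomp.width
  apply Finset.sup_le
  intro t _
  cases t
  apply max_le
  · rw [adh_eq_zero]
    omega
  · rw [tor_eq_zero]
    omega

lemma tcw_le : tcw (Gg j ℓ) ≤ 4 := by
  have hmem : (D j).width (Gg j ℓ) ∈
      {w | ∃ (N : Type) (_ : Fintype N) (D : TreeCutDecomp N (Vp j)), D.width (Gg j ℓ) = w} :=
    ⟨PUnit, inferInstance, D j, rfl⟩
  exact le_trans (Nat.sInf_le hmem) (width_le j ℓ)

end Phases

-- AUXEND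
end VG

/-- **vertex gadget.** For all `j, ℓ ∈ ℕ` there is an SRTI instance `H`
(on `4j + 5` vertices) with distinguished vertices `c` and `w` such that the only edge
incident to `c` is `e = {c, w}`, ranked `ℓ` by `c`, and:
(i) there is a stable matching not containing `e`, the maximum size of a stable
matching not containing `e` is `j + 2`, and every such matching leaves `c` unmatched
while `e` is not blocking;
(ii) there is a stable matching containing `e`, and the maximum size of a stable
matching containing `e` is `2j + 2` (counting `e`).
Moreover the gadget `H − c` has `4j + 4` vertices and tree-cut width at most `4`. -/
theorem vertex_gadget (j ℓ : ℕ) :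
    ∃ (n : ℕ) (H : SimpleGraph (Fin n)) (rk : Fin n → Fin n → ℕ∞) (c w : Fin n),
      (∀ v, rk v v = ⊤) ∧
      (∀ v u, H.Adj v u → rk v u ≠ ⊤) ∧
      H.Adj c w ∧ (∀ x, H.Adj c x → x = w) ∧ rk c w = (ℓ : ℕ∞) ∧
      -- (i)
      (∃ M : Matching H, Stable H rk M ∧ s(c, w) ∉ M.edgeSet ∧
        M.edgeSet.ncard = j + 2) ∧
      (∀ M : Matching H, Stable H rk M → s(c, w) ∉ M.edgeSet →
        M.edgeSet.ncard ≤ j + 2 ∧ M.partner c = c ∧ ¬ IsBlocking H rk M c w) ∧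
      -- (ii)
      (∃ M : Matching H, Stable H rk M ∧ s(c, w) ∈ M.edgeSet ∧
        M.edgeSet.ncard = 2 * j + 2) ∧
      (∀ M : Matching H, Stable H rk M → s(c, w) ∈ M.edgeSet →
        M.edgeSet.ncard ≤ 2 * j + 2) ∧
      -- size and tree-cut width of the gadget `H − c`
      n = 4 * j + 5 ∧
      tcw (SimpleGraph.comap (Subtype.val : {x : Fin n // x ≠ c} → Fin n) H) ≤ 4 := by
  classical
  refine ⟨4*j+5, VG.Hg j ℓ, VG.rkF j ℓ, VG.eW j (.inl .c), VG.eW j (.inl .w),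
    ?_, ?_, ?_, ?_, ?_, ?_, ?_, ?_, ?_, rfl, ?_⟩
  · -- rk v v = ⊤
    intro v
    exact VG.rk'_self j ℓ _
  · -- adjacent ⇒ rank ≠ ⊤
    intro v u h
    exact h.2.1
  · -- H.Adj c w
    rw [VG.Hg_adj_eW]
    exact ⟨by simp, by simp [VG.rk'], by simp [VG.rk']⟩
  · -- only neighbour
    intro x hx
    obtain ⟨a, rfl⟩ := (VG.eW j).surjective x
    rw [VG.Hg_adj_eW] at hx
    rw [VG.nbr_c hx]
  · -- rk c w = ℓ
    rw [VG.rkF_eW]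
    simp [VG.rk']
  · -- existence of stable matching avoiding e
    exact ⟨VG.M1 j ℓ, VG.stable_M1 j ℓ, VG.e_not_mem_M1 j ℓ, VG.ncard_M1 j ℓ⟩
  · -- all stable matchings avoiding e
    intro M hst he
    have hforce := VG.forcing M hst he
    have hfun : M.partner = (VG.M1 j ℓ).partner := by
      funext v
      obtain ⟨a, rfl⟩ := (VG.eW j).surjective v
      rw [hforce a]
      simp [VG.M1]
    have hes : M.edgeSet = (VG.M1 j ℓ).edgeSet := by
      unfold Matching.edgeSet
      rw [hfun]
    refine ⟨?_, ?_, hst _ _⟩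
    · rw [hes, VG.ncard_M1 j ℓ]
    · rw [hforce (.inl .c)]
      rfl
  · -- existence of stable matching containing e
    exact ⟨VG.M2 j ℓ, VG.stable_M2 j ℓ, VG.e_mem_M2 j ℓ, VG.ncard_M2 j ℓ⟩
  · -- all matchings are small
    intro M _ _
    have := VG.two_mul_ncard_le M
    rw [Fintype.card_fin] at this
    omega
  · -- tree-cut width
    exact VG.tcw_le j ℓ


end
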